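/- Let 0 ≤ b < d, φ(x) := exp(−x²/2) and m̂ := ∫_b^d φ(x) dx. Then ∫_b^d φ(z) ( ∫_{−z}^d ( ∫_{max(b,y)}^d φ(x) dx ) dy ) dz = 2 m̂ ( φ(b) − φ(d) ). -/

import Mathlib

open MeasureTheory Real

/-- `φ(x) = exp(−x²/2)`. -/
noncomputable def phi (x : ℝ) : ℝ := Real.exp (-(x ^ 2 / 2))

lemma phi_cont : Continuous phi := by
  unfold phi; fun_prop

lemma negphi_hasDeriv (x : ℝ) : HasDerivAt (fun t : ℝ => -phi t) (x * phi x) x := by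
  have h1 : HasDerivAt (fun t : ℝ => -(t ^ 2 / 2)) (-x) x := by
    have := ((hasDerivAt_pow 2 x).div_const 2).fun_neg
    simpa using this
  have h3 := h1.exp.fun_neg
  have : -(Real.exp (-(x ^ 2 / 2)) * -x) = x * phi x := by simp [phi]; ring
  rw [this] at h3
  exact h3

lemma int_xphi (a c : ℝ) : (∫ x in a..c, x * phi x) = phi a - phi c := by
  have h := intervalIntegral.integral_eq_sub_of_hasDerivAt
    (f := fun t : ℝ => -phi t) (f' := fun x => x * phi x)
    (fun x _ => negphi_hasDeriv x)
    ((continuous_id.mul phi_cont).intervalIntegrable a c)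
  rw [h]; ring

lemma F_hasDeriv (d y : ℝ) : HasDerivAt (fun u : ℝ => ∫ x in u..d, phi x) (-phi y) y := by
  have h : HasDerivAt (fun u : ℝ => ∫ x in d..u, phi x) (phi y) y :=
    intervalIntegral.integral_hasDerivAt_right (phi_cont.intervalIntegrable d y)
      (phi_cont.stronglyMeasurableAtFilter _ _) phi_cont.continuousAt
  have h2 : HasDerivAt (fun i => -∫ x in d..i, phi x) (-phi y) y := h.fun_neg
  convert h2 using 2 with u
  rw [intervalIntegral.integral_symm]

lemma F_cont (d : ℝ) : Continuous (fun u : ℝ => ∫ x in u..d, phi x) := by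
  have h : Continuous (fun u : ℝ => ∫ x in d..u, phi x) :=
    intervalIntegral.continuous_primitive (fun a b => phi_cont.intervalIntegrable a b) d
  have h2 := h.fun_neg
  convert h2 using 2 with u
  rw [intervalIntegral.integral_symm]

lemma C_eq (b d : ℝ) :
    (∫ y in b..d, (∫ x in y..d, phi x))
      = (phi b - phi d) - b * (∫ x in b..d, phi x) := by
  have hparts := intervalIntegral.integral_mul_deriv_eq_deriv_mul
    (u := fun y : ℝ => y) (u' := fun _ => (1 : ℝ))
    (v := fun y : ℝ => ∫ x in y..d, phi x) (v' := fun y => -phi y)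
    (fun x _ => hasDerivAt_id x) (fun x _ => F_hasDeriv d x)
    (intervalIntegrable_const) ((phi_cont.neg).intervalIntegrable b d)
  simp only [one_mul, intervalIntegral.integral_same, mul_zero, zero_sub] at hparts
  have hx : (∫ y in b..d, y * -phi y) = -(phi b - phi d) := by
    simp only [mul_neg]
    rw [intervalIntegral.integral_neg, int_xphi]
  rw [hx] at hparts
  linarith

/-- the exact triple-integral identity
`∫_b^d φ(z) (∫_{−z}^d (∫_{max(b,y)}^d φ(x) dx) dy) dz = 2 m̂ (φ(b) − φ(d))`. -/
theorem triple_integral_identity (b d : ℝ) (hb : 0 ≤ b) (hbd : b < d) :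
    (∫ z in b..d, phi z * ∫ y in (-z)..d, ∫ x in (max b y)..d, phi x)
      = 2 * (∫ x in b..d, phi x) * (phi b - phi d) := by
  set M : ℝ := ∫ x in b..d, phi x with hM
  set C : ℝ := ∫ y in b..d, (∫ x in y..d, phi x) with hC
  have hIcont : Continuous (fun y : ℝ => ∫ x in (max b y)..d, phi x) :=
    (F_cont d).comp (continuous_const.max continuous_id)
  have hJ : ∀ z ∈ Set.uIcc b d,
      (∫ y in (-z)..d, ∫ x in (max b y)..d, phi x) = (b + z) * M + C := by
    intro z hz
    rw [Set.uIcc_of_le hbd.le] at hz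
    have hbz : b ≤ z := hz.1
    have hsplit : (∫ y in (-z)..b, ∫ x in (max b y)..d, phi x)
        + (∫ y in b..d, ∫ x in (max b y)..d, phi x)
        = ∫ y in (-z)..d, ∫ x in (max b y)..d, phi x :=
      intervalIntegral.integral_add_adjacent_intervals
        (hIcont.intervalIntegrable (-z) b) (hIcont.intervalIntegrable b d)
    have h1 : (∫ y in (-z)..b, ∫ x in (max b y)..d, phi x) = (b + z) * M := by
      rw [intervalIntegral.integral_congr (g := fun _ => M)]
      · simp only [intervalIntegral.integral_const, smul_eq_mul]; ring
      · intro y hy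
        rw [Set.uIcc_of_le (by linarith)] at hy
        simp [max_eq_left hy.2, hM]
    have h2 : (∫ y in b..d, ∫ x in (max b y)..d, phi x) = C := by
      rw [hC]
      apply intervalIntegral.integral_congr
      intro y hy
      rw [Set.uIcc_of_le hbd.le] at hy
      simp [max_eq_right hy.1]
    rw [h1, h2] at hsplit
    linarith
  have hcongr : (∫ z in b..d, phi z * ∫ y in (-z)..d, ∫ x in (max b y)..d, phi x)
      = ∫ z in b..d, ((b * M + C) * phi z + M * (z * phi z)) := by
    apply intervalIntegral.integral_congr
    intro z hz
    dsimp only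
    rw [hJ z hz]; ring
  have hint1 : IntervalIntegrable (fun z : ℝ => (b * M + C) * phi z) volume b d :=
    (continuous_const.mul phi_cont).intervalIntegrable b d
  have hint2 : IntervalIntegrable (fun z : ℝ => M * (z * phi z)) volume b d :=
    (continuous_const.mul (continuous_id.mul phi_cont)).intervalIntegrable b d
  rw [hcongr, intervalIntegral.integral_add hint1 hint2,
    intervalIntegral.integral_const_mul, intervalIntegral.integral_const_mul,
    int_xphi, ← hM, hC, C_eq, ← hM]
  ring
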